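/- (Suboptimality of pessimistic value iteration under pointwise uncertainty quantification.) In a finite-horizon tabular MDP with rewards in [0,1], let Γ_h : S×A → [0,∞) and f̂_h : S×A → ℝ for h = 1,…,H, and define Q̂_{H+1} ≡ 0 and, backward for h = H,…,1: Q̂_h(s,a) = f̂_h(s,a) − Γ_h(s,a), V̂_h(s) = max_a Q̂_h(s,a), and let π̂_h(s) ∈ argmax_a Q̂_h(s,a) be the greedy policy. Suppose the pointwise pessimism condition holds: |f̂_h(s,a) − (r_h(s,a) + Σ_{s'} P_h(s'|s,a) V̂_{h+1}(s'))| ≤ Γ_h(s,a) for all h, s, a. Then for any optimal policy π*, v^{π*} − v^{π̂} ≤ 2 Σ_{h=1}^H Σ_{(s,a)} d^{π*}_h(s,a) Γ_h(s,a). -/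

import Mathlib

open Finset MeasureTheory

section MDPDefs

variable {S A : Type} [Fintype S] [Fintype A]

/-- `π` is a (time-inhomogeneous, Markov) policy: `π t s a = π_t(a|s)`. -/
def IsPolicy (π : ℕ → S → A → ℝ) : Prop :=
  (∀ t s a, 0 ≤ π t s a) ∧ ∀ t s, ∑ a : A, π t s a = 1

/-- `P` is a transition kernel: `P t s a s' = P_t(s'|s,a)`. -/
def IsKernel (P : ℕ → S → A → S → ℝ) : Prop :=
  (∀ t s a s', 0 ≤ P t s a s') ∧ ∀ t s a, ∑ s' : S, P t s a s' = 1

/-- `d` is a probability distribution on states. -/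
def IsDist (d : S → ℝ) : Prop := (∀ s, 0 ≤ d s) ∧ ∑ s : S, d s = 1

/-- Value function `V^π_t` (time `t` is 0-indexed, horizon `H`, `V^π_t = 0` for `t ≥ H`):
`V^π_t(s) = Σ_a π_t(a|s) (r_t(s,a) + Σ_{s'} P_t(s'|s,a) V^π_{t+1}(s'))`. -/
noncomputable def valueV (H : ℕ) (P : ℕ → S → A → S → ℝ) (r : ℕ → S → A → ℝ)
    (π : ℕ → S → A → ℝ) (t : ℕ) : S → ℝ :=
  if _h : t < H then
    fun s => ∑ a : A, π t s a * (r t s a + ∑ s' : S, P t s a s' * valueV H P r π (t + 1) s')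
  else fun _ => 0
termination_by H - t
decreasing_by omega

/-- Q function `Q^π_t(s,a) = r_t(s,a) + Σ_{s'} P_t(s'|s,a) V^π_{t+1}(s')`. -/
noncomputable def qval (H : ℕ) (P : ℕ → S → A → S → ℝ) (r : ℕ → S → A → ℝ)
    (π : ℕ → S → A → ℝ) (t : ℕ) (s : S) (a : A) : ℝ :=
  r t s a + ∑ s' : S, P t s a s' * valueV H P r π (t + 1) s'

/-- The value of a policy: `v^π = Σ_s d₁(s) V^π_1(s)`. -/
noncomputable def vval (H : ℕ) (P : ℕ → S → A → S → ℝ) (r : ℕ → S → A → ℝ)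
    (π : ℕ → S → A → ℝ) (d1 : S → ℝ) : ℝ :=
  ∑ s : S, d1 s * valueV H P r π 0 s

/-- Marginal state occupancy `d^π_t(s)` (time 0-indexed). -/
noncomputable def occS (P : ℕ → S → A → S → ℝ) (π : ℕ → S → A → ℝ) (d1 : S → ℝ) :
    ℕ → S → ℝ
  | 0 => d1
  | t + 1 => fun s' => ∑ s : S, ∑ a : A, occS P π d1 t s * π t s a * P t s a s'

/-- Marginal state-action occupancy `d^π_t(s,a) = d^π_t(s) π_t(a|s)`. -/
noncomputable def occSA (P : ℕ → S → A → S → ℝ) (π : ℕ → S → A → ℝ) (d1 : S → ℝ)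
    (t : ℕ) (s : S) (a : A) : ℝ :=
  occS P π d1 t s * π t s a

end MDPDefs

section AuxPVI

variable {S A : Type} [Fintype S] [Fintype A]

lemma valueV_eq_of_lt (H : ℕ) (P : ℕ → S → A → S → ℝ) (r : ℕ → S → A → ℝ)
    (π : ℕ → S → A → ℝ) {t : ℕ} (ht : t < H) (s : S) :
    valueV H P r π t s
      = ∑ a : A, π t s a * (r t s a + ∑ s' : S, P t s a s' * valueV H P r π (t + 1) s') := by
  rw [valueV]; simp [ht]

lemma valueV_eq_of_ge (H : ℕ) (P : ℕ → S → A → S → ℝ) (r : ℕ → S → A → ℝ)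
    (π : ℕ → S → A → ℝ) {t : ℕ} (ht : ¬ t < H) (s : S) :
    valueV H P r π t s = 0 := by
  rw [valueV]; simp [ht]

lemma occS_nonneg (P : ℕ → S → A → S → ℝ) (π : ℕ → S → A → ℝ) (d1 : S → ℝ)
    (hP : ∀ t s a s', 0 ≤ P t s a s') (hπ : ∀ t s a, 0 ≤ π t s a)
    (hd1 : ∀ s, 0 ≤ d1 s) : ∀ t s, 0 ≤ occS P π d1 t s := by
  intro t
  induction t with
  | zero => exact hd1
  | succ t ih =>
    intro s'
    refine Finset.sum_nonneg fun s _ => Finset.sum_nonneg fun a _ => ?_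
    exact mul_nonneg (mul_nonneg (ih s) (hπ t s a)) (hP t s a s')

lemma occS_step (P : ℕ → S → A → S → ℝ) (π : ℕ → S → A → ℝ) (d1 : S → ℝ)
    (t : ℕ) (f : S → ℝ) :
    ∑ s' : S, occS P π d1 (t + 1) s' * f s'
      = ∑ s : S, ∑ a : A, occS P π d1 t s * π t s a * ∑ s' : S, P t s a s' * f s' := by
  simp only [occS, Finset.sum_mul, Finset.mul_sum]
  rw [Finset.sum_comm]
  refine Finset.sum_congr rfl fun s _ => ?_
  rw [Finset.sum_comm]
  exact Finset.sum_congr rfl fun a _ => Finset.sum_congr rfl fun s' _ => by ring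

end AuxPVI

section PVI

variable {S A : Type} [Fintype S] [Fintype A]

/-- The pessimistic Q estimate `Q̂_t = f̂_t − Γ_t`. -/
noncomputable def qhat (fhat Γ : ℕ → S → A → ℝ) (t : ℕ) (s : S) (a : A) : ℝ :=
  fhat t s a - Γ t s a

/-- The pessimistic value estimate `V̂_t(s) = max_a Q̂_t(s,a)` for `t < H`, and
`V̂_t = 0` past the horizon. -/
noncomputable def vhat [Nonempty A] (H : ℕ) (fhat Γ : ℕ → S → A → ℝ) (t : ℕ) (s : S) : ℝ :=
  if t < H then Finset.univ.sup' Finset.univ_nonempty (fun a : A => qhat fhat Γ t s a)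
  else 0

/-- Suboptimality of pessimistic value iteration under pointwise
uncertainty quantification.  In a finite-horizon tabular MDP with rewards in
`[0,1]`, let `Γ_h ≥ 0` and `f̂_h` be given, define `Q̂_h = f̂_h − Γ_h`,
`V̂_h(s) = max_a Q̂_h(s,a)`, and let `π̂` be greedy w.r.t. `Q̂`.  If the pointwise
pessimism condition `|f̂_h(s,a) − (r_h(s,a) + Σ_{s'} P_h(s'|s,a) V̂_{h+1}(s'))| ≤ Γ_h(s,a)`
holds for all `h, s, a`, then for any optimal policy `π*`,
`v^{π*} − v^{π̂} ≤ 2 Σ_h Σ_{s,a} d^{π*}_h(s,a) Γ_h(s,a)`. -/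
theorem pessimistic_value_iteration_suboptimality [Nonempty S] [Nonempty A] [DecidableEq A]
    (H : ℕ) (hH : 1 ≤ H)
    (P : ℕ → S → A → S → ℝ) (r : ℕ → S → A → ℝ) (d1 : S → ℝ)
    (hP : IsKernel P) (hr : ∀ t s a, r t s a ∈ Set.Icc (0 : ℝ) 1) (hd1 : IsDist d1)
    (Γ fhat : ℕ → S → A → ℝ) (hΓ : ∀ t s a, 0 ≤ Γ t s a)
    (pihat : ℕ → S → A)
    (hgreedy : ∀ t < H, ∀ s : S, qhat fhat Γ t s (pihat t s) = vhat H fhat Γ t s)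
    (hpess : ∀ t < H, ∀ (s : S) (a : A),
      |fhat t s a - (r t s a + ∑ s' : S, P t s a s' * vhat H fhat Γ (t + 1) s')|
        ≤ Γ t s a)
    (pistar : ℕ → S → A → ℝ) (hpistar : IsPolicy pistar)
    (hopt : ∀ π' : ℕ → S → A → ℝ, IsPolicy π' → vval H P r π' d1 ≤ vval H P r pistar d1) :
    vval H P r pistar d1
        - vval H P r (fun t s a => if a = pihat t s then (1 : ℝ) else 0) d1
      ≤ 2 * ∑ t ∈ Finset.range H, ∑ s : S, ∑ a : A, occSA P pistar d1 t s a * Γ t s a:= by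
  classical
  obtain ⟨hPnn, hPsum⟩ := hP
  obtain ⟨hπnn, hπsum⟩ := hpistar
  obtain ⟨hd1nn, hd1sum⟩ := hd1
  set πh : ℕ → S → A → ℝ := fun t s a => if a = pihat t s then (1 : ℝ) else 0 with hπh
  -- pointwise bounds from pessimism
  have hub : ∀ t, t < H → ∀ s a, qhat fhat Γ t s a
      ≤ r t s a + ∑ s' : S, P t s a s' * vhat H fhat Γ (t + 1) s' := by
    intro t ht s a
    have h := abs_le.1 (hpess t ht s a)
    simp only [qhat]
    linarith [h.2]
  have hlb : ∀ t, t < H → ∀ s a,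
      r t s a + (∑ s' : S, P t s a s' * vhat H fhat Γ (t + 1) s') - 2 * Γ t s a
        ≤ qhat fhat Γ t s a := by
    intro t ht s a
    have h := abs_le.1 (hpess t ht s a)
    simp only [qhat]
    linarith [h.1]
  have hvq : ∀ t, t < H → ∀ s a, qhat fhat Γ t s a ≤ vhat H fhat Γ t s := by
    intro t ht s a
    simp only [vhat, if_pos ht]
    exact Finset.le_sup' _ (Finset.mem_univ a)
  have hvhat0 : ∀ t, ¬ t < H → ∀ s, vhat H fhat Γ t s = 0 := by
    intro t ht s; simp [vhat, ht]
  -- Lemma A : the pessimistic value underestimates the value of the greedy policy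
  have hA : ∀ n t, H ≤ t + n → ∀ s, vhat H fhat Γ t s ≤ valueV H P r πh t s := by
    intro n
    induction n with
    | zero =>
      intro t ht s
      have h1 : ¬ t < H := by omega
      rw [valueV_eq_of_ge H P r πh h1 s, hvhat0 t h1 s]
    | succ n ih =>
      intro t ht s
      by_cases h1 : t < H
      · have hval : valueV H P r πh t s
            = r t s (pihat t s)
              + ∑ s' : S, P t s (pihat t s) s' * valueV H P r πh (t + 1) s' := by
          rw [valueV_eq_of_lt H P r πh h1 s]
          simp [hπh, ite_mul, Finset.sum_ite_eq']
        have h2 : vhat H fhat Γ t s = qhat fhat Γ t s (pihat t s) := (hgreedy t h1 s).symm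
        rw [h2, hval]
        calc qhat fhat Γ t s (pihat t s)
            ≤ r t s (pihat t s)
              + ∑ s' : S, P t s (pihat t s) s' * vhat H fhat Γ (t + 1) s' := hub t h1 s _
          _ ≤ _ := by
              apply add_le_add (le_refl _)
              apply Finset.sum_le_sum
              intro s' _
              exact mul_le_mul_of_nonneg_left (ih (t + 1) (by omega) s') (hPnn t s _ s')
      · rw [valueV_eq_of_ge H P r πh h1 s, hvhat0 t h1 s]
  have hocc : ∀ t s, 0 ≤ occS P pistar d1 t s := occS_nonneg P pistar d1 hPnn hπnn hd1nn
  -- Lemma B : cumulative regret bound against the pessimistic value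
  have hB : ∀ n t, H ≤ t + n →
      ∑ s : S, occS P pistar d1 t s * (valueV H P r pistar t s - vhat H fhat Γ t s)
        ≤ 2 * ∑ h ∈ Finset.Ico t H, ∑ s : S, ∑ a : A, occSA P pistar d1 h s a * Γ h s a := by
    intro n
    induction n with
    | zero =>
      intro t ht
      have h1 : ¬ t < H := by omega
      rw [Finset.Ico_eq_empty (by omega)]
      simp [valueV_eq_of_ge H P r pistar h1, hvhat0 t h1]
    | succ n ih =>
      intro t ht
      by_cases h1 : t < H
      · have hpt : ∀ s : S, valueV H P r pistar t s - vhat H fhat Γ t s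
            ≤ ∑ a : A, pistar t s a *
                ((∑ s' : S, P t s a s' *
                    (valueV H P r pistar (t + 1) s' - vhat H fhat Γ (t + 1) s'))
                  + 2 * Γ t s a) := by
          intro s
          have hq : ∑ a : A, pistar t s a * qhat fhat Γ t s a ≤ vhat H fhat Γ t s := by
            calc ∑ a : A, pistar t s a * qhat fhat Γ t s a
                ≤ ∑ a : A, pistar t s a * vhat H fhat Γ t s :=
                  Finset.sum_le_sum fun a _ =>
                    mul_le_mul_of_nonneg_left (hvq t h1 s a) (hπnn t s a)
              _ = vhat H fhat Γ t s := by rw [← Finset.sum_mul, hπsum t s, one_mul]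
          have hq2 : ∑ a : A, pistar t s a *
              (r t s a + (∑ s' : S, P t s a s' * vhat H fhat Γ (t + 1) s') - 2 * Γ t s a)
              ≤ ∑ a : A, pistar t s a * qhat fhat Γ t s a :=
            Finset.sum_le_sum fun a _ =>
              mul_le_mul_of_nonneg_left (hlb t h1 s a) (hπnn t s a)
          have hval : valueV H P r pistar t s = ∑ a : A, pistar t s a *
              (r t s a + ∑ s' : S, P t s a s' * valueV H P r pistar (t + 1) s') :=
            valueV_eq_of_lt H P r pistar h1 s
          have hsplit : ∀ a : A,
              pistar t s a * (r t s a + ∑ s' : S, P t s a s' * valueV H P r pistar (t + 1) s')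
              - pistar t s a * (r t s a
                  + (∑ s' : S, P t s a s' * vhat H fhat Γ (t + 1) s') - 2 * Γ t s a)
              = pistar t s a *
                ((∑ s' : S, P t s a s' *
                    (valueV H P r pistar (t + 1) s' - vhat H fhat Γ (t + 1) s'))
                  + 2 * Γ t s a) := by
            intro a
            have hsub : ∑ s' : S, P t s a s' *
                (valueV H P r pistar (t + 1) s' - vhat H fhat Γ (t + 1) s')
                = (∑ s' : S, P t s a s' * valueV H P r pistar (t + 1) s')
                  - ∑ s' : S, P t s a s' * vhat H fhat Γ (t + 1) s' := by
              rw [← Finset.sum_sub_distrib]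
              exact Finset.sum_congr rfl fun s' _ => by ring
            rw [hsub]; ring
          calc valueV H P r pistar t s - vhat H fhat Γ t s
              ≤ valueV H P r pistar t s
                - ∑ a : A, pistar t s a *
                  (r t s a + (∑ s' : S, P t s a s' * vhat H fhat Γ (t + 1) s')
                    - 2 * Γ t s a) := by linarith
            _ = ∑ a : A,
                (pistar t s a *
                    (r t s a + ∑ s' : S, P t s a s' * valueV H P r pistar (t + 1) s')
                  - pistar t s a *
                    (r t s a + (∑ s' : S, P t s a s' * vhat H fhat Γ (t + 1) s')
                      - 2 * Γ t s a)) := by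
                rw [hval, Finset.sum_sub_distrib]
            _ = _ := Finset.sum_congr rfl fun a _ => hsplit a
        have hstep : ∑ s : S, occS P pistar d1 t s *
              (valueV H P r pistar t s - vhat H fhat Γ t s)
            ≤ ∑ s : S, occS P pistar d1 t s * (∑ a : A, pistar t s a *
                ((∑ s' : S, P t s a s' *
                    (valueV H P r pistar (t + 1) s' - vhat H fhat Γ (t + 1) s'))
                  + 2 * Γ t s a)) :=
          Finset.sum_le_sum fun s _ => mul_le_mul_of_nonneg_left (hpt s) (hocc t s)
        have hid : ∑ s : S, occS P pistar d1 t s * (∑ a : A, pistar t s a *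
              ((∑ s' : S, P t s a s' *
                  (valueV H P r pistar (t + 1) s' - vhat H fhat Γ (t + 1) s'))
                + 2 * Γ t s a))
            = (∑ s' : S, occS P pistar d1 (t + 1) s' *
                (valueV H P r pistar (t + 1) s' - vhat H fhat Γ (t + 1) s'))
              + 2 * ∑ s : S, ∑ a : A, occSA P pistar d1 t s a * Γ t s a := by
          have h2 := occS_step P pistar d1 t
            (fun s' => valueV H P r pistar (t + 1) s' - vhat H fhat Γ (t + 1) s')
          calc ∑ s : S, occS P pistar d1 t s * (∑ a : A, pistar t s a *
                ((∑ s' : S, P t s a s' *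
                    (valueV H P r pistar (t + 1) s' - vhat H fhat Γ (t + 1) s'))
                  + 2 * Γ t s a))
              = ∑ s : S, ∑ a : A,
                  (occS P pistar d1 t s * pistar t s a *
                      (∑ s' : S, P t s a s' *
                        (valueV H P r pistar (t + 1) s' - vhat H fhat Γ (t + 1) s'))
                    + occS P pistar d1 t s * (pistar t s a * (2 * Γ t s a))) := by
                refine Finset.sum_congr rfl fun s _ => ?_
                rw [Finset.mul_sum]
                exact Finset.sum_congr rfl fun a _ => by ring
            _ = (∑ s : S, ∑ a : A, occS P pistar d1 t s * pistar t s a *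
                      (∑ s' : S, P t s a s' *
                        (valueV H P r pistar (t + 1) s' - vhat H fhat Γ (t + 1) s')))
                  + ∑ s : S, ∑ a : A,
                      occS P pistar d1 t s * (pistar t s a * (2 * Γ t s a)) := by
                rw [← Finset.sum_add_distrib]
                exact Finset.sum_congr rfl fun s _ => Finset.sum_add_distrib
            _ = _ := by
                rw [← h2]
                congr 1
                rw [Finset.mul_sum]
                refine Finset.sum_congr rfl fun s _ => ?_
                rw [Finset.mul_sum]
                refine Finset.sum_congr rfl fun a _ => ?_
                simp only [occSA]; ring
        have hIH := ih (t + 1) (by omega)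
        have hbot : ∑ h ∈ Finset.Ico t H,
              ∑ s : S, ∑ a : A, occSA P pistar d1 h s a * Γ h s a
            = (∑ s : S, ∑ a : A, occSA P pistar d1 t s a * Γ t s a)
              + ∑ h ∈ Finset.Ico (t + 1) H,
                  ∑ s : S, ∑ a : A, occSA P pistar d1 h s a * Γ h s a :=
          Finset.sum_eq_sum_Ico_succ_bot h1 _
        rw [hbot]
        rw [hid] at hstep
        linarith
      · have h0 : ¬ t < H := h1
        rw [Finset.Ico_eq_empty (by omega)]
        simp [valueV_eq_of_ge H P r pistar h0, hvhat0 t h0]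
  -- conclusion
  have hg0 := hB H 0 (by omega)
  rw [show Finset.Ico 0 H = Finset.range H from (Finset.range_eq_Ico H).symm] at hg0
  have h1 : vval H P r pistar d1 - vval H P r πh d1
      ≤ ∑ s : S, occS P pistar d1 0 s * (valueV H P r pistar 0 s - vhat H fhat Γ 0 s) := by
    have hocc0 : occS P pistar d1 0 = d1 := rfl
    simp only [vval, hocc0]
    rw [← Finset.sum_sub_distrib]
    apply Finset.sum_le_sum
    intro s _
    rw [mul_sub]
    have := mul_le_mul_of_nonneg_left (hA H 0 (by omega) s) (hd1nn s)
    linarith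
  linarith


end PVI
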